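/- Let s ∈ ℕ and let a₀, a₁, …, a_s ∈ L(H) be pairwise orthogonal projections (a_i a_j = 0 for i ≠ j) with a = a₀ + a₁ + ⋯ + a_s. Let u₁, …, u_s ∈ L(H) be self-adjoint with a_k u_k + u_k a_k = u_k for each k, u_j u_k = 0 for j ≠ k, and a_j u_k = u_k a_j = 0 whenever j ≠ k (including j = 0), and set u := u₁ + ⋯ + u_s. Then for every t ∈ ℝ, exp(t·G(a,u)) applied to a equals a₀ + Σ_{k=1}^{s} exp(t·G(a_k,u_k)) applied to a_k. -/

import Mathlib

variable {H : Type*} [NormedAddCommGroup H] [InnerProductSpace ℂ H] [CompleteSpace H]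

/-- For a projection `a` and a self-adjoint `u` in `L(H)`, `G a u` is the bounded linear
operator on `L(H)` given by `z ↦ (ua - au)z - z(ua - au)`. -/
noncomputable def G (a u : H →L[ℂ] H) : (H →L[ℂ] H) →L[ℝ] (H →L[ℂ] H) :=
  ContinuousLinearMap.mul ℝ (H →L[ℂ] H) (u * a - a * u)
    - (ContinuousLinearMap.mul ℝ (H →L[ℂ] H)).flip (u * a - a * u)

open NormedSpace
set_option maxHeartbeats 1000000
set_option synthInstance.maxHeartbeats 400000

section Aux

set_option linter.unusedSectionVars false

variable {M N : Type*} [NormedRing M] [NormedAlgebra ℝ M] [CompleteSpace M]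
  [NormedAddCommGroup N] [NormedSpace ℝ N] [T2Space N]

/-- Abstract form of `G`: the inner derivation `z ↦ Dz - zD`. -/
noncomputable def Gd (D : M) : M →L[ℝ] M :=
  ContinuousLinearMap.mul ℝ M D - (ContinuousLinearMap.mul ℝ M).flip D

lemma Gd_apply (D z : M) : Gd D z = D * z - z * D := by
  simp [Gd, ContinuousLinearMap.mul_apply']

lemma commute_Gd (D E : M) (h1 : D * E = 0) (h2 : E * D = 0) :
    Commute (Gd D) (Gd E) := by
  have hz1 : ∀ z : M, z * D * E = 0 := fun z => by rw [mul_assoc, h1, mul_zero]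
  have hz2 : ∀ z : M, z * E * D = 0 := fun z => by rw [mul_assoc, h2, mul_zero]
  ext z
  simp only [ContinuousLinearMap.mul_apply, Gd_apply, mul_sub, sub_mul, ← mul_assoc,
    h1, h2, hz1, hz2, zero_mul, zero_sub, sub_zero]
  abel

lemma exp_apply_tsum {M' : Type*} [NormedAddCommGroup M'] [NormedSpace ℝ M']
    [CompleteSpace M'] (f : M' →L[ℝ] M') (x : M') :
    exp f x = ∑' n : ℕ, (n.factorial : ℝ)⁻¹ • (f ^ n) x := by
  rw [exp_eq_tsum ℝ]
  have := (ContinuousLinearMap.apply ℝ M' x).map_tsum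
    (f := fun n : ℕ => (n.factorial : ℝ)⁻¹ • f ^ n) (expSeries_summable' f)
  simpa using this

lemma exp_apply_eq_self {M' : Type*} [NormedAddCommGroup M'] [NormedSpace ℝ M']
    [CompleteSpace M'] (f : M' →L[ℝ] M') (x : M') (h : f x = 0) : exp f x = x := by
  rw [exp_apply_tsum]
  have hpow : ∀ n : ℕ, n ≠ 0 → (f ^ n) x = 0 := by
    intro n hn
    obtain ⟨m, rfl⟩ := Nat.exists_eq_succ_of_ne_zero hn
    rw [pow_succ, ContinuousLinearMap.mul_apply, h, map_zero]
  rw [tsum_eq_single 0]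
  · simp
  · intro n hn; rw [hpow n hn, smul_zero]

lemma exp_apply_ker {M' : Type*} [NormedAddCommGroup M'] [NormedSpace ℝ M']
    [CompleteSpace M'] (f : M' →L[ℝ] M') (φ : M' →L[ℝ] N) (x : M')
    (hinv : ∀ y, φ y = 0 → φ (f y) = 0) (hx : φ x = 0) : φ (exp f x) = 0 := by
  rw [exp_apply_tsum]
  have hsum : Summable fun n : ℕ => (n.factorial : ℝ)⁻¹ • (f ^ n) x := by
    exact ((expSeries_summable' (𝕂 := ℝ) f).map
      (ContinuousLinearMap.apply ℝ M' x).toLinearMap.toAddMonoidHom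
      (ContinuousLinearMap.apply ℝ M' x).continuous).congr (by simp)
  rw [φ.map_tsum hsum]
  have hpow : ∀ n : ℕ, φ ((f ^ n) x) = 0 := by
    intro n
    induction n with
    | zero => simpa using hx
    | succ m ih => rw [pow_succ', ContinuousLinearMap.mul_apply]; exact hinv _ ih
  simp only [map_smul, hpow, smul_zero, tsum_zero]

end Aux

/-- Let `a₀, a₁, …, aₛ` be pairwise orthogonal projections with
`a = a₀ + a₁ + ⋯ + aₛ`, and let `u₁, …, uₛ` be self-adjoint with `aₖuₖ + uₖaₖ = uₖ`,
`uⱼuₖ = 0` for `j ≠ k` and `aⱼuₖ = uₖaⱼ = 0` for `j ≠ k` (including `j = 0`).  With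
`u := u₁ + ⋯ + uₛ`, for every `t ∈ ℝ`,
`exp(t·G(a,u)) a = a₀ + ∑ₖ exp(t·G(aₖ,uₖ)) aₖ`. -/
theorem exp_G_orthogonal_sum (s : ℕ) (a₀ : H →L[ℂ] H) (A U : Fin s → H →L[ℂ] H)
    (a u : H →L[ℂ] H)
    (h0sa : IsSelfAdjoint a₀) (h0idem : a₀ * a₀ = a₀)
    (hAsa : ∀ k, IsSelfAdjoint (A k)) (hAidem : ∀ k, A k * A k = A k)
    (hAorth : ∀ j k, j ≠ k → A j * A k = 0)
    (hA0orth : ∀ k, a₀ * A k = 0 ∧ A k * a₀ = 0)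
    (ha : a = a₀ + ∑ k, A k)
    (hUsa : ∀ k, IsSelfAdjoint (U k))
    (hAU : ∀ k, A k * U k + U k * A k = U k)
    (hUU : ∀ j k, j ≠ k → U j * U k = 0)
    (hAU' : ∀ j k, j ≠ k → A j * U k = 0 ∧ U k * A j = 0)
    (h0U : ∀ k, a₀ * U k = 0 ∧ U k * a₀ = 0)
    (hu : u = ∑ k, U k) :
    ∀ t : ℝ, NormedSpace.exp (t • G a u) a =
      a₀ + ∑ k, NormedSpace.exp (t • G (A k) (U k)) (A k) := by
  intro t
  set D : Fin s → (H →L[ℂ] H) := fun k => U k * A k - A k * U k with hDdef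
  -- general product helpers
  have key : ∀ x y z w : H →L[ℂ] H, y * z = 0 → x * y * (z * w) = 0 := fun x y z w h => by
    rw [mul_assoc x, ← mul_assoc y, h, zero_mul, mul_zero]
  have key2 : ∀ x y z : H →L[ℂ] H, y * z = 0 → x * y * z = 0 := fun x y z h => by
    rw [mul_assoc, h, mul_zero]
  have key2' : ∀ x y z : H →L[ℂ] H, x * y = 0 → x * (y * z) = 0 := fun x y z h => by
    rw [← mul_assoc, h, zero_mul]
  -- u a - a u = ∑ D k
  have hua : u * a = ∑ j, U j * A j := by
    rw [hu, ha, Finset.sum_mul]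
    refine Finset.sum_congr rfl fun j _ => ?_
    rw [mul_add, (h0U j).2, zero_add, Finset.mul_sum]
    exact Finset.sum_eq_single j (fun b _ hb => (hAU' b j hb).2) (by simp)
  have hau : a * u = ∑ j, A j * U j := by
    rw [hu, ha, Finset.mul_sum]
    refine Finset.sum_congr rfl fun j _ => ?_
    rw [add_mul, (h0U j).1, zero_add, Finset.sum_mul]
    exact Finset.sum_eq_single j (fun b _ hb => (hAU' b j hb).1) (by simp)
  have hD : u * a - a * u = ∑ k, D k := by
    rw [hua, hau, ← Finset.sum_sub_distrib]
  -- orthogonality of the D's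
  have DD : ∀ j k, j ≠ k → D j * D k = 0 := by
    intro j k h
    simp only [hDdef, sub_mul, mul_sub,
      key (U j) (A j) (U k) (A k) ((hAU' j k h).1),
      key (U j) (A j) (A k) (U k) (hAorth j k h),
      key (A j) (U j) (U k) (A k) (hUU j k h),
      key (A j) (U j) (A k) (U k) ((hAU' k j h.symm).2)]
    simp
  have DA : ∀ j k, j ≠ k → D j * A k = 0 ∧ A k * D j = 0 := by
    intro j k h
    constructor
    · simp only [hDdef, sub_mul,
        key2 (U j) (A j) (A k) (hAorth j k h),
        key2 (A j) (U j) (A k) ((hAU' k j h.symm).2)]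
      simp
    · simp only [hDdef, mul_sub,
        key2' (A k) (U j) (A j) ((hAU' k j h.symm).1),
        key2' (A k) (A j) (U j) (hAorth k j h.symm)]
      simp
  have Da0 : ∀ k, D k * a₀ = 0 ∧ a₀ * D k = 0 := by
    intro k
    constructor
    · simp only [hDdef, sub_mul,
        key2 (U k) (A k) a₀ ((hA0orth k).2),
        key2 (A k) (U k) a₀ ((h0U k).2)]
      simp
    · simp only [hDdef, mul_sub,
        key2' a₀ (U k) (A k) ((h0U k).1),
        key2' a₀ (A k) (U k) ((hA0orth k).1)]
      simp
  -- rewrite the G's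
  have hGk : ∀ k, G (A k) (U k) = Gd (D k) := fun k => rfl
  have hGa : G a u = ∑ k, Gd (D k) := by
    show Gd (u * a - a * u) = _
    rw [hD]
    unfold Gd
    rw [map_sum, map_sum, ← Finset.sum_sub_distrib]
  have hGsum : t • G a u = ∑ k, t • Gd (D k) := by
    rw [hGa, Finset.smul_sum]
  -- commutation
  have hcomm : ∀ j k : Fin s, Commute (t • Gd (D j)) (t • Gd (D k)) := by
    intro j k
    rcases eq_or_ne j k with rfl | h
    · exact Commute.refl _
    · exact ((commute_Gd (D j) (D k) (DD j k h) (DD k j h.symm)).smul_left t).smul_right t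
  set E : Fin s → (H →L[ℂ] H) := fun k => exp (t • Gd (D k)) (A k) with hEdef
  -- fixed points of exp (t • Gd (D j))
  have hfix_a0 : ∀ j, exp (t • Gd (D j)) a₀ = a₀ := by
    intro j
    refine exp_apply_eq_self _ _ ?_
    rw [ContinuousLinearMap.smul_apply, Gd_apply, (Da0 j).1, (Da0 j).2, sub_zero, smul_zero]
  have hfix_A : ∀ j k, j ≠ k → exp (t • Gd (D j)) (A k) = A k := by
    intro j k h
    refine exp_apply_eq_self _ _ ?_
    rw [ContinuousLinearMap.smul_apply, Gd_apply, (DA j k h).1, (DA j k h).2, sub_zero, smul_zero]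
  have hfix_E : ∀ j k, j ≠ k → exp (t • Gd (D j)) (E k) = E k := by
    intro j k h
    refine exp_apply_eq_self _ _ ?_
    have hleft : D j * E k = 0 := by
      refine exp_apply_ker (t • Gd (D k)) (ContinuousLinearMap.mul ℝ (H →L[ℂ] H) (D j)) (A k) ?_ ?_
      · intro y hy
        simp only [ContinuousLinearMap.mul_apply'] at hy ⊢
        rw [ContinuousLinearMap.smul_apply, Gd_apply, mul_smul_comm, mul_sub,
          key2' (D j) (D k) y (DD j k h), ← mul_assoc, hy, zero_mul, sub_zero, smul_zero]
      · simp only [ContinuousLinearMap.mul_apply']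
        exact (DA j k h).1
    have hright : E k * D j = 0 := by
      refine exp_apply_ker (t • Gd (D k)) ((ContinuousLinearMap.mul ℝ (H →L[ℂ] H)).flip (D j)) (A k) ?_ ?_
      · intro y hy
        simp only [ContinuousLinearMap.flip_apply, ContinuousLinearMap.mul_apply'] at hy ⊢
        rw [ContinuousLinearMap.smul_apply, Gd_apply, smul_mul_assoc, sub_mul,
          key2 y (D k) (D j) (DD k j h.symm), mul_assoc, hy, mul_zero, zero_sub, neg_zero,
          smul_zero]
      · simp only [ContinuousLinearMap.flip_apply, ContinuousLinearMap.mul_apply']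
        exact (DA j k h).2
    rw [ContinuousLinearMap.smul_apply, Gd_apply, hleft, hright, sub_zero, smul_zero]
  -- main induction
  have main : ∀ F : Finset (Fin s),
      exp (∑ k ∈ F, t • Gd (D k)) a = a₀ + (∑ k ∈ F, E k) + ∑ k ∈ Fᶜ, A k := by
    intro F
    induction F using Finset.induction_on with
    | empty =>
      simp only [Finset.sum_empty, exp_zero, ContinuousLinearMap.one_apply, zero_add,
        Finset.compl_empty, add_zero]
      rw [ha]
    | @insert j F hj IH =>
      rw [Finset.sum_insert hj,
        (letI : NormedAlgebra ℚ ((H →L[ℂ] H) →L[ℝ] H →L[ℂ] H) :=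
          NormedAlgebra.restrictScalars ℚ ℝ _
        exp_add_of_commute (Commute.sum_right F _ _ fun i _ => hcomm j i)),
        ContinuousLinearMap.mul_apply, IH]
      have hjc : j ∈ Fᶜ := Finset.mem_compl.mpr hj
      have hsplit : ∑ k ∈ Fᶜ, A k = A j + ∑ k ∈ (insert j F)ᶜ, A k := by
        rw [Finset.compl_insert, ← Finset.sum_insert (Finset.notMem_erase j _),
          Finset.insert_erase hjc]
      rw [hsplit, map_add, map_add, map_add, hfix_a0 j]
      have h1 : exp (t • Gd (D j)) (∑ k ∈ F, E k) = ∑ k ∈ F, E k := by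
        rw [map_sum]
        exact Finset.sum_congr rfl fun k hk => hfix_E j k (fun e => hj (e ▸ hk))
      have h2 : exp (t • Gd (D j)) (∑ k ∈ (insert j F)ᶜ, A k)
          = ∑ k ∈ (insert j F)ᶜ, A k := by
        rw [map_sum]
        refine Finset.sum_congr rfl fun k hk => hfix_A j k ?_
        intro e
        exact (Finset.mem_compl.mp hk) (e ▸ Finset.mem_insert_self j F)
      rw [h1, h2, Finset.sum_insert hj]
      show a₀ + ∑ k ∈ F, E k + (E j + _) = _
      abel
  have := main Finset.univ
  rw [Finset.compl_univ, Finset.sum_empty, add_zero] at this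
  calc exp (t • G a u) a = exp (∑ k, t • Gd (D k)) a := by rw [hGsum]
    _ = a₀ + ∑ k, E k := this
    _ = a₀ + ∑ k, exp (t • G (A k) (U k)) (A k) := by
        refine congrArg _ (Finset.sum_congr rfl fun k _ => ?_)
        rw [hGk k]
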